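/- For every integer k with 1 ≤ k ≤ n, one has D_k ∘ M_0 = M_k ∘ (σ_k ∘ σ_{k−1} ∘ ⋯ ∘ σ_1) as R-linear endomorphisms of V. -/

import Mathlib

open Finset

/-- `compSeq σ a L = σ (a + L - 1) ∘ ⋯ ∘ σ (a + 1) ∘ σ a` (the identity if `L = 0`).
In particular `compSeq σ 1 k = σ k ∘ ⋯ ∘ σ 1`. -/
def compSeq {R : Type*} [CommSemiring R] {V : Type*} [AddCommMonoid V] [Module R V]
    (σ : ℕ → Module.End R V) (a : ℕ) : ℕ → Module.End R V
  | 0 => 1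
  | L + 1 => σ (a + L) * compSeq σ a L

/-- With `x = t q⁻¹`, `y = -t⁻¹`, `α = 1 - x⁻¹`, the identification matrices `M_k`, the
partial Garside maps `D_k`, and the LKB generators `σ_k` satisfy
`D_k ∘ M_0 = M_k ∘ (σ_k ∘ ⋯ ∘ σ_1)` for every `1 ≤ k ≤ n`. -/
theorem Dk_M0_eq_Mk_sigma {R : Type*} [CommRing R] (q t : Rˣ)
    (x : Rˣ) (hx : x = t * q⁻¹) (y : R) (hy : y = -((t⁻¹ : Rˣ) : R))
    (α : R) (hα : α = 1 - ((x⁻¹ : Rˣ) : R))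
    {V : Type*} [AddCommGroup V] [Module R V]
    (n : ℕ) (hn : 1 ≤ n)
    (e : ℕ → ℕ → V)
    (b : Module.Basis {p : ℕ × ℕ // 1 ≤ p.1 ∧ p.1 < p.2 ∧ p.2 ≤ n + 1} R V)
    (hb : ∀ p : {p : ℕ × ℕ // 1 ≤ p.1 ∧ p.1 < p.2 ∧ p.2 ≤ n + 1}, b p = e p.1.1 p.1.2)
    (σ : ℕ → Module.End R V)
    (hσ : ∀ k i j, 1 ≤ k → k ≤ n → 1 ≤ i → i < j → j ≤ n + 1 →
      σ k (e i j) =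
        if i = k + 1 then (x : R) • e k j + (1 - (x : R)) • e i j
        else if k = i ∧ i + 1 < j then
          e (i + 1) j - ((x : R) * y * ((x : R) - 1)) • e k (k + 1)
        else if k = i ∧ j = i + 1 then -(((x : R) ^ 2 * y) • e k (k + 1))
        else if i < k ∧ k + 1 < j then e i j - (y * ((x : R) - 1) ^ 2) • e k (k + 1)
        else if i < k ∧ k + 1 = j then
          e i (j - 1) - ((x : R) * y * ((x : R) - 1)) • e k (k + 1)
        else if k = j then (x : R) • e i (j + 1) + (1 - (x : R)) • e i j
        else e i j)
    (M₀ : Module.End R V)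
    (hM₀ : ∀ i j, 1 ≤ i → i < j → j ≤ n + 1 →
      M₀ (e i j) = e i j + ∑ s ∈ Finset.Icc (i + 1) (j - 1), α • e i s)
    (Mk : ℕ → Module.End R V)
    (hMk : ∀ k, 1 ≤ k → k ≤ n → ∀ i j, 1 ≤ i → i < j → j ≤ n + 1 →
      Mk k (e i j) = e i j
        + (∑ j' ∈ (Finset.Icc (i + 1) (j - 1)).filter (fun j' => j' ≠ k + 1), α • e i j')
        + (if i ≤ k then ∑ j' ∈ Finset.Icc (k + 2) (j - 1), (α ^ 2) • e (k + 1) j' else 0)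
        + (if i ≤ k ∧ k + 2 ≤ j then α • e (k + 1) j else 0))
    (Dk : ℕ → Module.End R V)
    (hDk : ∀ k, 1 ≤ k → k ≤ n → ∀ i j, 1 ≤ i → i < j → j ≤ n + 1 →
      Dk k (e i j) =
        if i = 1 ∧ k + 1 < j then e (k + 1) j
        else if i = 1 ∧ k + 1 = j then ((t * q⁻¹ * q⁻¹ : Rˣ) : R) • e k (k + 1)
        else if i = 1 ∧ j ≤ k then
          ((t ^ (k + 2 - j) * q ^ ((j : ℤ) - (k : ℤ) - 3) : Rˣ) : R) • e (j - 1) (k + 1)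
        else if i ≤ k ∧ j ≤ k + 1 then ((t * q⁻¹ : Rˣ) : R) • e (i - 1) (j - 1)
        else if i ≤ k ∧ k + 2 ≤ j then ((t * q⁻¹ : Rˣ) : R) • e (i - 1) j
        else if i = k + 1 then ((t * q⁻¹ : Rˣ) : R) • e (i - 1) j
        else e i j) :
    ∀ k, 1 ≤ k → k ≤ n → Dk k * M₀ = Mk k * compSeq σ 1 k := by
  -- scalar identities
  have hXXi : (x:R) * ((x⁻¹:Rˣ):R) = 1 := by rw [← Units.val_mul, mul_inv_cancel, Units.val_one]
  have hI1 : (x:R) * α = (x:R) - 1 := by rw [hα]; linear_combination (-1 : R) * hXXi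
  have hXTi : (x:R) * ((t⁻¹:Rˣ):R) = ((q⁻¹:Rˣ):R) := by
    rw [← Units.val_mul, hx]; congr 1
    rw [mul_comm t q⁻¹, mul_assoc, mul_inv_cancel, mul_one]
  have hI2 : -(((x:R))^2 * y) = (x:R) * ((q⁻¹:Rˣ):R) := by
    rw [hy]; linear_combination (x:R) * hXTi
  have hI3 : -((x:R) * y * ((x:R)-1)) = α * ((x:R) * ((q⁻¹:Rˣ):R)) := by
    rw [hy]; linear_combination ((x:R)-1) * hXTi - ((q⁻¹:Rˣ):R) * hI1
  have h2' : ((x⁻¹:Rˣ):R) * ((q⁻¹:Rˣ):R) = ((t⁻¹:Rˣ):R) := by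
    rw [← Units.val_mul, hx]; congr 1
    rw [mul_inv, inv_inv, mul_assoc, mul_inv_cancel, mul_one]
  have h1' : ((t⁻¹:Rˣ):R) * (x:R) = ((q⁻¹:Rˣ):R) := by
    rw [← Units.val_mul, hx]; congr 1
    rw [← mul_assoc, inv_mul_cancel, one_mul]
  have hTiX : ((t⁻¹:Rˣ):R) * ((x:R)-1) = α * ((q⁻¹:Rˣ):R) := by
    rw [hα]; linear_combination h1' + h2'
  have hI4 : -(y * ((x:R)-1)^2) = α^2 * ((x:R) * ((q⁻¹:Rˣ):R)) := by
    rw [hy]; linear_combination ((x:R)-1) * hTiX - α * ((q⁻¹:Rˣ):R) * hI1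
  have hz1 : (x:R)*α + (1 - (x:R)) = 0 := by linear_combination hI1
  have hz2 : (x:R)*α^2 + (1-(x:R))*α = 0 := by linear_combination α * hI1
  have hxR : ((t * q⁻¹ : Rˣ) : R) = (x:R) := by rw [hx]
  have hxQ : ((t * q⁻¹ * q⁻¹ : Rˣ) : R) = (x:R) * ((q⁻¹:Rˣ):R) := by
    rw [Units.val_mul, hxR]
  have hUnit : ∀ (a:ℕ) (c:ℤ), (t^(a+1) * q^(c-1) : Rˣ) = (t^a * q^c) * (t*q⁻¹) := by
    intro a c; rw [pow_succ, zpow_sub_one, mul_mul_mul_comm]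
  have hqm2 : (q ^ (-2:ℤ) : Rˣ) = q⁻¹ * q⁻¹ := by
    rw [zpow_neg, show (2:ℤ) = ((2:ℕ):ℤ) from rfl, zpow_natCast, pow_two, mul_inv]
  -- the transfer operator L
  obtain ⟨L, hL⟩ : ∃ L : ℕ → Module.End R V, ∀ K i j, 1 ≤ i → i < j → j ≤ n+1 →
      L K (e i j) =
      (if i < K ∧ j = K then (x:R) • e i (K+1)
      else if i < K ∧ j = K+1 then e i K
      else if i = K ∧ j = K+1 then ((x:R) * ((q⁻¹:Rˣ):R)) • e K (K+1)
      else if i = K then e (K+1) j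
      else if i = K+1 then (x:R) • e K j
      else e i j) := by
    refine ⟨fun K => Module.Basis.constr (M' := V) b R (fun p =>
      if p.1.1 < K ∧ p.1.2 = K then (x:R) • e p.1.1 (K+1)
      else if p.1.1 < K ∧ p.1.2 = K+1 then e p.1.1 K
      else if p.1.1 = K ∧ p.1.2 = K+1 then ((x:R) * ((q⁻¹:Rˣ):R)) • e K (K+1)
      else if p.1.1 = K then e (K+1) p.1.2
      else if p.1.1 = K+1 then (x:R) • e K p.1.2
      else e p.1.1 p.1.2), ?_⟩
    intro K i j h1 h2 h3
    have he : e i j = b ⟨(i,j), ⟨h1, h2, h3⟩⟩ := (hb ⟨(i,j), ⟨h1, h2, h3⟩⟩).symm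
    conv_lhs => rw [he]
    beta_reduce
    rw [Module.Basis.constr_basis]
  -- extensionality principle
  have hext : ∀ F G : Module.End R V,
      (∀ i j, 1 ≤ i → i < j → j ≤ n+1 → F (e i j) = G (e i j)) → F = G := by
    intro F G h
    apply b.ext
    rintro ⟨⟨i, j⟩, h1, h2, h3⟩
    rw [hb]
    exact h i j h1 h2 h3
  have hIccE : ∀ a c : ℕ, c < a → Finset.Icc a c = (∅ : Finset ℕ) := fun a c h => Finset.Icc_eq_empty (by omega)
  have hsplit : ∀ (a c : ℕ) (f : ℕ → V), a ≤ c →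
      (∑ s ∈ Finset.Icc a c, f s) = f a + ∑ s ∈ Finset.Icc (a+1) c, f s := by
    intro a c f h
    rw [show Finset.Icc (a+1) c = (Finset.Icc a c).erase a by
      rw [Finset.Icc_erase_left, Finset.Icc_add_one_left_eq_Ioc],
      Finset.add_sum_erase _ f (Finset.mem_Icc.mpr ⟨le_rfl, h⟩)]
  have hfilter : ∀ (s : Finset ℕ) (a : ℕ), a ∉ s →
      (s.filter (fun j' => j' ≠ a)) = s := by
    intro s a ha
    rw [Finset.filter_ne', Finset.erase_eq_of_notMem ha]
  have hIccF : ∀ a c : ℕ, ((Finset.Icc a c).filter (fun j' => j' ≠ a)) = Finset.Icc (a+1) c := by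
    intro a c
    rw [Finset.filter_ne', Finset.Icc_erase_left, Finset.Icc_add_one_left_eq_Ioc]
  have hgb : (1-(x:R))*α = -((x:R)*α^2) := by linear_combination hz2
  have hgc : (x:R)*α = -(1-(x:R)) := by linear_combination hz1
  have heraseComm : ∀ (s : Finset ℕ) (a b : ℕ), (s.erase a).erase b = (s.erase b).erase a := by
    intro s a b; ext c; simp only [Finset.mem_erase]; tauto
  have hIccFtop : ∀ a c : ℕ, ((Finset.Icc a (c+1)).filter (fun j' => j' ≠ c+1)) = Finset.Icc a c := by
    intro a c
    rw [Finset.filter_ne', Finset.Icc_erase_right, Finset.Ico_add_one_right_eq_Icc]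
  -- Lemma B : Dk (K+1) = L (K+1) * Dk K
  have hB : ∀ K, 1 ≤ K → K + 1 ≤ n → Dk (K+1) = L (K+1) * Dk K := by
    intro K hK1 hKn
    have hKn' : K ≤ n := le_trans (Nat.le_succ K) hKn
    apply hext
    intro i j h1 h2 h3
    rw [Module.End.mul_apply, hDk K hK1 hKn' i j h1 h2 h3,
        hDk (K+1) (by omega) hKn i j h1 h2 h3]
    by_cases c1 : i = 1
    · subst c1
      by_cases c2 : j ≤ K
      · -- b3
        rw [if_neg (show ¬((1:ℕ) = 1 ∧ K + 1 < j) by omega),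
            if_neg (show ¬((1:ℕ) = 1 ∧ K + 1 = j) by omega),
            if_pos (show (1:ℕ) = 1 ∧ j ≤ K by omega),
            map_smul, hL (K+1) (j-1) (K+1) (by omega) (by omega) (by omega),
            if_pos (show j - 1 < K + 1 ∧ K + 1 = K + 1 by omega),
            if_neg (show ¬((1:ℕ) = 1 ∧ K + 1 + 1 < j) by omega),
            if_neg (show ¬((1:ℕ) = 1 ∧ K + 1 + 1 = j) by omega),
            if_pos (show (1:ℕ) = 1 ∧ j ≤ K + 1 by omega),
            smul_smul]
        congr 1
        rw [show K + 1 + 2 - j = (K + 2 - j) + 1 by omega,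
            show (j:ℤ) - ((K+1:ℕ):ℤ) - 3 = ((j:ℤ) - (K:ℤ) - 3) - 1 by push_cast; ring,
            hUnit (K+2-j) ((j:ℤ)-(K:ℤ)-3), Units.val_mul, hxR]
      · by_cases c3 : j = K + 1
        · subst c3
          rw [if_neg (show ¬((1:ℕ) = 1 ∧ K + 1 < K + 1) by omega),
              if_pos (show (1:ℕ) = 1 ∧ K + 1 = K + 1 by omega),
              map_smul, hL (K+1) K (K+1) (by omega) (by omega) (by omega),
              if_pos (show K < K + 1 ∧ K + 1 = K + 1 by omega),
              if_neg (show ¬((1:ℕ) = 1 ∧ K + 1 + 1 < K + 1) by omega),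
              if_neg (show ¬((1:ℕ) = 1 ∧ K + 1 + 1 = K + 1) by omega),
              if_pos (show (1:ℕ) = 1 ∧ K + 1 ≤ K + 1 by omega),
              smul_smul]
          rw [show K + 1 - 1 = K by omega]
          congr 1
          rw [show K + 1 + 2 - (K+1) = 1 + 1 by omega,
              show ((K+1:ℕ):ℤ) - ((K+1:ℕ):ℤ) - 3 = (-2 : ℤ) - 1 by push_cast; ring,
              hUnit 1 (-2), Units.val_mul, hxR, hqm2, pow_one]
          rw [Units.val_mul, Units.val_mul, Units.val_mul, Units.val_mul, ← mul_assoc]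
        · by_cases c4 : j = K + 2
          · subst c4
            rw [if_pos (show (1:ℕ) = 1 ∧ K + 1 < K + 2 by omega),
                hL (K+1) (K+1) (K+2) (by omega) (by omega) (by omega),
                if_neg (show ¬(K + 1 < K + 1 ∧ K + 2 = K + 1) by omega),
                if_neg (show ¬(K + 1 < K + 1 ∧ K + 2 = K + 1 + 1) by omega),
                if_pos (show K + 1 = K + 1 ∧ K + 2 = K + 1 + 1 by omega),
                if_neg (show ¬((1:ℕ) = 1 ∧ K + 1 + 1 < K + 2) by omega),
                if_pos (show (1:ℕ) = 1 ∧ K + 1 + 1 = K + 2 by omega), hxQ]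
          · -- j ≥ K+3
            rw [if_pos (show (1:ℕ) = 1 ∧ K + 1 < j by omega),
                hL (K+1) (K+1) j (by omega) (by omega) (by omega),
                if_neg (show ¬(K + 1 < K + 1 ∧ j = K + 1) by omega),
                if_neg (show ¬(K + 1 < K + 1 ∧ j = K + 1 + 1) by omega),
                if_neg (show ¬(K + 1 = K + 1 ∧ j = K + 1 + 1) by omega),
                if_pos (show K + 1 = K + 1 from rfl),
                if_pos (show (1:ℕ) = 1 ∧ K + 1 + 1 < j by omega)]
    · -- i ≥ 2
      by_cases c2 : i ≤ K
      · by_cases c3 : j ≤ K + 1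
        · rw [if_neg (show ¬(i = 1 ∧ K + 1 < j) by omega),
              if_neg (show ¬(i = 1 ∧ K + 1 = j) by omega),
              if_neg (show ¬(i = 1 ∧ j ≤ K) by omega),
              if_pos (show i ≤ K ∧ j ≤ K + 1 by omega),
              map_smul, hL (K+1) (i-1) (j-1) (by omega) (by omega) (by omega),
              if_neg (show ¬(i - 1 < K + 1 ∧ j - 1 = K + 1) by omega),
              if_neg (show ¬(i - 1 < K + 1 ∧ j - 1 = K + 1 + 1) by omega),
              if_neg (show ¬(i - 1 = K + 1 ∧ j - 1 = K + 1 + 1) by omega),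
              if_neg (show ¬(i - 1 = K + 1) by omega),
              if_neg (show ¬(i - 1 = K + 1 + 1) by omega),
              if_neg (show ¬(i = 1 ∧ K + 1 + 1 < j) by omega),
              if_neg (show ¬(i = 1 ∧ K + 1 + 1 = j) by omega),
              if_neg (show ¬(i = 1 ∧ j ≤ K + 1) by omega),
              if_pos (show i ≤ K + 1 ∧ j ≤ K + 1 + 1 by omega)]
        · by_cases c4 : j = K + 2
          · subst c4
            rw [if_neg (show ¬(i = 1 ∧ K + 1 < K + 2) by omega),
                if_neg (show ¬(i = 1 ∧ K + 1 = K + 2) by omega),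
                if_neg (show ¬(i = 1 ∧ K + 2 ≤ K) by omega),
                if_neg (show ¬(i ≤ K ∧ K + 2 ≤ K + 1) by omega),
                if_pos (show i ≤ K ∧ K + 2 ≤ K + 2 by omega),
                map_smul, hL (K+1) (i-1) (K+2) (by omega) (by omega) (by omega),
                if_neg (show ¬(i - 1 < K + 1 ∧ K + 2 = K + 1) by omega),
                if_pos (show i - 1 < K + 1 ∧ K + 2 = K + 1 + 1 by omega),
                if_neg (show ¬(i = 1 ∧ K + 1 + 1 < K + 2) by omega),
                if_neg (show ¬(i = 1 ∧ K + 1 + 1 = K + 2) by omega),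
                if_neg (show ¬(i = 1 ∧ K + 2 ≤ K + 1) by omega),
                if_pos (show i ≤ K + 1 ∧ K + 2 ≤ K + 1 + 1 by omega),
                show K + 2 - 1 = K + 1 from rfl]
          · -- j ≥ K + 3
            rw [if_neg (show ¬(i = 1 ∧ K + 1 < j) by omega),
                if_neg (show ¬(i = 1 ∧ K + 1 = j) by omega),
                if_neg (show ¬(i = 1 ∧ j ≤ K) by omega),
                if_neg (show ¬(i ≤ K ∧ j ≤ K + 1) by omega),
                if_pos (show i ≤ K ∧ K + 2 ≤ j by omega),
                map_smul, hL (K+1) (i-1) j (by omega) (by omega) (by omega),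
                if_neg (show ¬(i - 1 < K + 1 ∧ j = K + 1) by omega),
                if_neg (show ¬(i - 1 < K + 1 ∧ j = K + 1 + 1) by omega),
                if_neg (show ¬(i - 1 = K + 1 ∧ j = K + 1 + 1) by omega),
                if_neg (show ¬(i - 1 = K + 1) by omega),
                if_neg (show ¬(i - 1 = K + 1 + 1) by omega),
                if_neg (show ¬(i = 1 ∧ K + 1 + 1 < j) by omega),
                if_neg (show ¬(i = 1 ∧ K + 1 + 1 = j) by omega),
                if_neg (show ¬(i = 1 ∧ j ≤ K + 1) by omega),
                if_neg (show ¬(i ≤ K + 1 ∧ j ≤ K + 1 + 1) by omega),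
                if_pos (show i ≤ K + 1 ∧ K + 1 + 2 ≤ j by omega)]
      · by_cases c3 : i = K + 1
        · subst c3
          by_cases c4 : j = K + 2
          · subst c4
            rw [if_neg (show ¬(K + 1 = 1 ∧ K + 1 < K + 2) by omega),
                if_neg (show ¬(K + 1 = 1 ∧ K + 1 = K + 2) by omega),
                if_neg (show ¬(K + 1 = 1 ∧ K + 2 ≤ K) by omega),
                if_neg (show ¬(K + 1 ≤ K ∧ K + 2 ≤ K + 1) by omega),
                if_neg (show ¬(K + 1 ≤ K ∧ K + 2 ≤ K + 2) by omega),
                if_pos (show K + 1 = K + 1 from rfl),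
                map_smul, hL (K+1) (K+1-1) (K+2) (by omega) (by omega) (by omega),
                show K + 1 - 1 = K by omega,
                if_neg (show ¬(K < K + 1 ∧ K + 2 = K + 1) by omega),
                if_pos (show K < K + 1 ∧ K + 2 = K + 1 + 1 by omega),
                if_neg (show ¬(K + 1 = 1 ∧ K + 1 + 1 < K + 2) by omega),
                if_neg (show ¬(K + 1 = 1 ∧ K + 1 + 1 = K + 2) by omega),
                if_neg (show ¬(K + 1 = 1 ∧ K + 2 ≤ K + 1) by omega),
                if_pos (show K + 1 ≤ K + 1 ∧ K + 2 ≤ K + 1 + 1 by omega),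
                show K + 2 - 1 = K + 1 from rfl]
          · rw [if_neg (show ¬(K + 1 = 1 ∧ K + 1 < j) by omega),
                if_neg (show ¬(K + 1 = 1 ∧ K + 1 = j) by omega),
                if_neg (show ¬(K + 1 = 1 ∧ j ≤ K) by omega),
                if_neg (show ¬(K + 1 ≤ K ∧ j ≤ K + 1) by omega),
                if_neg (show ¬(K + 1 ≤ K ∧ K + 2 ≤ j) by omega),
                if_pos (show K + 1 = K + 1 from rfl),
                map_smul, hL (K+1) (K+1-1) j (by omega) (by omega) (by omega),
                show K + 1 - 1 = K by omega,
                if_neg (show ¬(K < K + 1 ∧ j = K + 1) by omega),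
                if_neg (show ¬(K < K + 1 ∧ j = K + 1 + 1) by omega),
                if_neg (show ¬(K = K + 1 ∧ j = K + 1 + 1) by omega),
                if_neg (show ¬(K = K + 1) by omega),
                if_neg (show ¬(K = K + 1 + 1) by omega),
                if_neg (show ¬(K + 1 = 1 ∧ K + 1 + 1 < j) by omega),
                if_neg (show ¬(K + 1 = 1 ∧ K + 1 + 1 = j) by omega),
                if_neg (show ¬(K + 1 = 1 ∧ j ≤ K + 1) by omega),
                if_neg (show ¬(K + 1 ≤ K + 1 ∧ j ≤ K + 1 + 1) by omega),
                if_pos (show K + 1 ≤ K + 1 ∧ K + 1 + 2 ≤ j by omega)]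
        · by_cases c4 : i = K + 2
          · subst c4
            rw [if_neg (show ¬(K + 2 = 1 ∧ K + 1 < j) by omega),
                if_neg (show ¬(K + 2 = 1 ∧ K + 1 = j) by omega),
                if_neg (show ¬(K + 2 = 1 ∧ j ≤ K) by omega),
                if_neg (show ¬(K + 2 ≤ K ∧ j ≤ K + 1) by omega),
                if_neg (show ¬(K + 2 ≤ K ∧ K + 2 ≤ j) by omega),
                if_neg (show ¬(K + 2 = K + 1) by omega),
                hL (K+1) (K+2) j (by omega) (by omega) (by omega),
                if_neg (show ¬(K + 2 < K + 1 ∧ j = K + 1) by omega),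
                if_neg (show ¬(K + 2 < K + 1 ∧ j = K + 1 + 1) by omega),
                if_neg (show ¬(K + 2 = K + 1 ∧ j = K + 1 + 1) by omega),
                if_neg (show ¬(K + 2 = K + 1) by omega),
                if_pos (show K + 2 = K + 1 + 1 from rfl),
                if_neg (show ¬(K + 2 = 1 ∧ K + 1 + 1 < j) by omega),
                if_neg (show ¬(K + 2 = 1 ∧ K + 1 + 1 = j) by omega),
                if_neg (show ¬(K + 2 = 1 ∧ j ≤ K + 1) by omega),
                if_neg (show ¬(K + 2 ≤ K + 1 ∧ j ≤ K + 1 + 1) by omega),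
                if_neg (show ¬(K + 2 ≤ K + 1 ∧ K + 1 + 2 ≤ j) by omega),
                if_pos (show K + 2 = K + 1 + 1 from rfl),
                show K + 2 - 1 = K + 1 from rfl, hxR]
          · rw [if_neg (show ¬(i = 1 ∧ K + 1 < j) by omega),
                if_neg (show ¬(i = 1 ∧ K + 1 = j) by omega),
                if_neg (show ¬(i = 1 ∧ j ≤ K) by omega),
                if_neg (show ¬(i ≤ K ∧ j ≤ K + 1) by omega),
                if_neg (show ¬(i ≤ K ∧ K + 2 ≤ j) by omega),
                if_neg (show ¬(i = K + 1) by omega),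
                hL (K+1) i j (by omega) (by omega) (by omega),
                if_neg (show ¬(i < K + 1 ∧ j = K + 1) by omega),
                if_neg (show ¬(i < K + 1 ∧ j = K + 1 + 1) by omega),
                if_neg (show ¬(i = K + 1 ∧ j = K + 1 + 1) by omega),
                if_neg (show ¬(i = K + 1) by omega),
                if_neg (show ¬(i = K + 1 + 1) by omega),
                if_neg (show ¬(i = 1 ∧ K + 1 + 1 < j) by omega),
                if_neg (show ¬(i = 1 ∧ K + 1 + 1 = j) by omega),
                if_neg (show ¬(i = 1 ∧ j ≤ K + 1) by omega),
                if_neg (show ¬(i ≤ K + 1 ∧ j ≤ K + 1 + 1) by omega),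
                if_neg (show ¬(i ≤ K + 1 ∧ K + 1 + 2 ≤ j) by omega),
                if_neg (show ¬(i = K + 1 + 1) by omega)]
  -- Lemma A : Mk (K+1) * σ (K+1) = L (K+1) * Mk K
  have hA : ∀ K, 1 ≤ K → K + 1 ≤ n → Mk (K+1) * σ (K+1) = L (K+1) * Mk K := by
    intro K hK1 hKn
    have hKn' : K ≤ n := by omega
    apply hext
    intro i j h1 h2 h3
    rw [Module.End.mul_apply, Module.End.mul_apply, hσ (K+1) i j (by omega) hKn h1 h2 h3,
        hMk K hK1 hKn' i j h1 h2 h3]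
    by_cases c1 : K + 3 ≤ i
    · -- case 1 : i ≥ K+3, everything is the identity zone
      rw [if_neg (show ¬(i = K + 1 + 1) by omega),
          if_neg (show ¬(K + 1 = i ∧ i + 1 < j) by omega),
          if_neg (show ¬(K + 1 = i ∧ j = i + 1) by omega),
          if_neg (show ¬(i < K + 1 ∧ K + 1 + 1 < j) by omega),
          if_neg (show ¬(i < K + 1 ∧ K + 1 + 1 = j) by omega),
          if_neg (show ¬(K + 1 = j) by omega),
          hMk (K+1) (by omega) hKn i j h1 h2 h3,
          if_neg (show ¬(i ≤ K + 1) by omega),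
          if_neg (show ¬(i ≤ K + 1 ∧ K + 1 + 2 ≤ j) by omega),
          if_neg (show ¬(i ≤ K) by omega),
          if_neg (show ¬(i ≤ K ∧ K + 2 ≤ j) by omega),
          hfilter (Finset.Icc (i+1) (j-1)) (K+1+1) (by simp only [Finset.mem_Icc]; omega),
          hfilter (Finset.Icc (i+1) (j-1)) (K+1) (by simp only [Finset.mem_Icc]; omega),
          add_zero, add_zero, map_add, map_sum,
          hL (K+1) i j h1 h2 h3,
          if_neg (show ¬(i < K + 1 ∧ j = K + 1) by omega),
          if_neg (show ¬(i < K + 1 ∧ j = K + 1 + 1) by omega),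
          if_neg (show ¬(i = K + 1 ∧ j = K + 1 + 1) by omega),
          if_neg (show ¬(i = K + 1) by omega),
          if_neg (show ¬(i = K + 1 + 1) by omega)]
      congr 1
      refine Finset.sum_congr rfl (fun s hs => ?_)
      rw [Finset.mem_Icc] at hs
      rw [map_smul, hL (K+1) i s h1 (by omega) (by omega),
          if_neg (show ¬(i < K + 1 ∧ s = K + 1) by omega),
          if_neg (show ¬(i < K + 1 ∧ s = K + 1 + 1) by omega),
          if_neg (show ¬(i = K + 1 ∧ s = K + 1 + 1) by omega),
          if_neg (show ¬(i = K + 1) by omega),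
          if_neg (show ¬(i = K + 1 + 1) by omega)]
    · by_cases c2 : i = K + 2
      · subst c2
        rw [if_pos (show K + 2 = K + 1 + 1 from rfl), map_add, map_smul, map_smul,
            hMk (K+1) (by omega) hKn (K+1) j (by omega) (by omega) h3,
            hMk (K+1) (by omega) hKn (K+2) j (by omega) h2 h3,
            if_pos (show K+1 ≤ K+1 from le_rfl),
            if_pos (show K+1 ≤ K+1 ∧ K+1+2 ≤ j by omega),
            if_neg (show ¬(K+2 ≤ K+1) by omega),
            if_neg (show ¬(K+2 ≤ K+1 ∧ K+1+2 ≤ j) by omega),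
            hIccF (K+1+1) (j-1),
            hfilter (Finset.Icc (K+2+1) (j-1)) (K+1+1) (by simp only [Finset.mem_Icc]; omega),
            if_neg (show ¬(K+2 ≤ K) by omega),
            if_neg (show ¬(K+2 ≤ K ∧ K+2 ≤ j) by omega),
            hfilter (Finset.Icc (K+2+1) (j-1)) (K+1) (by simp only [Finset.mem_Icc]; omega)]
        simp only [add_zero]
        rw [map_add, map_sum,
            hL (K+1) (K+2) j (by omega) h2 h3,
            if_neg (show ¬(K + 2 < K + 1 ∧ j = K + 1) by omega),
            if_neg (show ¬(K + 2 < K + 1 ∧ j = K + 1 + 1) by omega),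
            if_neg (show ¬(K + 2 = K + 1 ∧ j = K + 1 + 1) by omega),
            if_neg (show ¬(K + 2 = K + 1) by omega),
            if_pos (show K + 2 = K + 1 + 1 from rfl)]
        have hsumR : (∑ s ∈ Finset.Icc (K+2+1) (j-1), L (K+1) (α • e (K+2) s))
            = ∑ s ∈ Finset.Icc (K+2+1) (j-1), (α * (x:R)) • e (K+1) s := by
          refine Finset.sum_congr rfl (fun s hs => ?_)
          rw [Finset.mem_Icc] at hs
          rw [map_smul, hL (K+1) (K+2) s (by omega) (by omega) (by omega),
              if_neg (show ¬(K + 2 < K + 1 ∧ s = K + 1) by omega),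
              if_neg (show ¬(K + 2 < K + 1 ∧ s = K + 1 + 1) by omega),
              if_neg (show ¬(K + 2 = K + 1 ∧ s = K + 1 + 1) by omega),
              if_neg (show ¬(K + 2 = K + 1) by omega),
              if_pos (show K + 2 = K + 1 + 1 from rfl), smul_smul]
        rw [hsumR]
        simp only [smul_add, Finset.smul_sum, smul_smul]
        rw [show K+1+1 = K+2 from rfl, show K+1+2 = K+2+1 from rfl]
        rw [show ((x:R)*α) • e (K+2) j = -((1-(x:R)) • e (K+2) j) from by rw [hgc, neg_smul]]
        simp only [hgb, neg_smul, Finset.sum_neg_distrib]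
        simp only [mul_comm α (x:R)]
        abel_nf
        all_goals simp only [smul_zero, add_zero]
      · by_cases c3 : i = K + 1
        · subst c3
          by_cases c4 : j = K + 2
          · subst c4
            rw [if_neg (show ¬(K+1 = K+1+1) by omega),
                if_neg (show ¬(K+1 = K+1 ∧ K+1+1 < K+2) by omega),
                if_pos (show K+1 = K+1 ∧ K+2 = K+1+1 by omega),
                map_neg, map_smul,
                hMk (K+1) (by omega) hKn (K+1) (K+1+1) (by omega) (by omega) (by omega),
                hIccE (K+1+1) (K+1+1-1) (by omega), hIccE (K+1+2) (K+1+1-1) (by omega),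
                if_pos (show K+1 ≤ K+1 from le_rfl),
                if_neg (show ¬(K+1 ≤ K+1 ∧ K+1+2 ≤ K+1+1) by omega),
                if_neg (show ¬(K+1 ≤ K) by omega),
                if_neg (show ¬(K+1 ≤ K ∧ K+2 ≤ K+2) by omega)]
            simp only [Finset.filter_empty, Finset.sum_empty, add_zero]
            rw [hL (K+1) (K+1) (K+2) (by omega) (by omega) (by omega),
                if_neg (show ¬(K+1 < K+1 ∧ K+2 = K+1) by omega),
                if_neg (show ¬(K+1 < K+1 ∧ K+2 = K+1+1) by omega),
                if_pos (show K+1 = K+1 ∧ K+2 = K+1+1 by omega),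
                ← hI2, neg_smul]
          · -- i = K+1, j ≥ K+3
            rw [if_neg (show ¬(K+1 = K+1+1) by omega),
                if_pos (show K+1 = K+1 ∧ K+1+1 < j by omega),
                map_sub, map_smul,
                hMk (K+1) (by omega) hKn (K+1+1) j (by omega) (by omega) h3,
                if_neg (show ¬(K+1+1 ≤ K+1) by omega),
                if_neg (show ¬(K+1+1 ≤ K+1 ∧ K+1+2 ≤ j) by omega),
                hfilter (Finset.Icc (K+1+1+1) (j-1)) (K+1+1) (by simp only [Finset.mem_Icc]; omega),
                hMk (K+1) (by omega) hKn (K+1) (K+1+1) (by omega) (by omega) (by omega),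
                hIccE (K+1+1) (K+1+1-1) (by omega), hIccE (K+1+2) (K+1+1-1) (by omega),
                if_pos (show K+1 ≤ K+1 from le_rfl),
                if_neg (show ¬(K+1 ≤ K+1 ∧ K+1+2 ≤ K+1+1) by omega),
                if_neg (show ¬(K+1 ≤ K) by omega),
                if_neg (show ¬(K+1 ≤ K ∧ K+2 ≤ j) by omega),
                hfilter (Finset.Icc (K+1+1) (j-1)) (K+1) (by simp only [Finset.mem_Icc]; omega)]
            simp only [Finset.filter_empty, Finset.sum_empty, add_zero]
            rw [map_add, map_sum,
                hL (K+1) (K+1) j (by omega) (by omega) h3,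
                if_neg (show ¬(K+1 < K+1 ∧ j = K+1) by omega),
                if_neg (show ¬(K+1 < K+1 ∧ j = K+1+1) by omega),
                if_neg (show ¬(K+1 = K+1 ∧ j = K+1+1) by omega),
                if_pos (show K+1 = K+1 from rfl),
                hsplit (K+1+1) (j-1) _ (by omega),
                map_smul,
                hL (K+1) (K+1) (K+1+1) (by omega) (by omega) (by omega),
                if_neg (show ¬(K+1 < K+1 ∧ K+1+1 = K+1) by omega),
                if_neg (show ¬(K+1 < K+1 ∧ K+1+1 = K+1+1) by omega),
                if_pos (show K+1 = K+1 ∧ K+1+1 = K+1+1 by omega)]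
            have hsumR : (∑ s ∈ Finset.Icc (K+1+1+1) (j-1), L (K+1) (α • e (K+1) s))
                = ∑ s ∈ Finset.Icc (K+1+1+1) (j-1), α • e (K+1+1) s := by
              refine Finset.sum_congr rfl (fun s hs => ?_)
              rw [Finset.mem_Icc] at hs
              rw [map_smul, hL (K+1) (K+1) s (by omega) (by omega) (by omega),
                  if_neg (show ¬(K+1 < K+1 ∧ s = K+1) by omega),
                  if_neg (show ¬(K+1 < K+1 ∧ s = K+1+1) by omega),
                  if_neg (show ¬(K+1 = K+1 ∧ s = K+1+1) by omega),
                  if_pos (show K+1 = K+1 from rfl)]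
            rw [hsumR, smul_smul, ← hI3, neg_smul]
            abel
        · -- i ≤ K
          have hiK : i ≤ K := by omega
          by_cases c4 : j ≤ K
          · -- 4a
            rw [if_neg (show ¬(i = K+1+1) by omega),
                if_neg (show ¬(K+1 = i ∧ i+1 < j) by omega),
                if_neg (show ¬(K+1 = i ∧ j = i+1) by omega),
                if_neg (show ¬(i < K+1 ∧ K+1+1 < j) by omega),
                if_neg (show ¬(i < K+1 ∧ K+1+1 = j) by omega),
                if_neg (show ¬(K+1 = j) by omega),
                hMk (K+1) (by omega) hKn i j h1 h2 h3,
                if_pos (show i ≤ K+1 by omega),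
                if_neg (show ¬(i ≤ K+1 ∧ K+1+2 ≤ j) by omega),
                hIccE (K+1+2) (j-1) (by omega),
                hfilter (Finset.Icc (i+1) (j-1)) (K+1+1) (by simp only [Finset.mem_Icc]; omega),
                if_pos (show i ≤ K from hiK),
                if_neg (show ¬(i ≤ K ∧ K+2 ≤ j) by omega),
                hIccE (K+2) (j-1) (by omega),
                hfilter (Finset.Icc (i+1) (j-1)) (K+1) (by simp only [Finset.mem_Icc]; omega)]
            simp only [Finset.sum_empty, add_zero]
            rw [map_add, map_sum, hL (K+1) i j h1 h2 h3,
                if_neg (show ¬(i < K+1 ∧ j = K+1) by omega),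
                if_neg (show ¬(i < K+1 ∧ j = K+1+1) by omega),
                if_neg (show ¬(i = K+1 ∧ j = K+1+1) by omega),
                if_neg (show ¬(i = K+1) by omega),
                if_neg (show ¬(i = K+1+1) by omega)]
            congr 1
            refine Finset.sum_congr rfl (fun s hs => ?_)
            rw [Finset.mem_Icc] at hs
            rw [map_smul, hL (K+1) i s h1 (by omega) (by omega),
                if_neg (show ¬(i < K+1 ∧ s = K+1) by omega),
                if_neg (show ¬(i < K+1 ∧ s = K+1+1) by omega),
                if_neg (show ¬(i = K+1 ∧ s = K+1+1) by omega),
                if_neg (show ¬(i = K+1) by omega),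
                if_neg (show ¬(i = K+1+1) by omega)]
          · by_cases c5 : j = K + 1
            · -- 4b
              subst c5
              rw [if_neg (show ¬(i = K+1+1) by omega),
                  if_neg (show ¬(K+1 = i ∧ i+1 < K+1) by omega),
                  if_neg (show ¬(K+1 = i ∧ K+1 = i+1) by omega),
                  if_neg (show ¬(i < K+1 ∧ K+1+1 < K+1) by omega),
                  if_neg (show ¬(i < K+1 ∧ K+1+1 = K+1) by omega),
                  if_pos (show K+1 = K+1 from rfl),
                  map_add, map_smul, map_smul,
                  hMk (K+1) (by omega) hKn i (K+1+1) h1 (by omega) (by omega),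
                  hMk (K+1) (by omega) hKn i (K+1) h1 (by omega) (by omega),
                  if_pos (show i ≤ K+1 by omega),
                  if_neg (show ¬(i ≤ K+1 ∧ K+1+2 ≤ K+1+1) by omega),
                  if_neg (show ¬(i ≤ K+1 ∧ K+1+2 ≤ K+1) by omega),
                  hIccE (K+1+2) (K+1+1-1) (by omega),
                  hIccE (K+1+2) (K+1-1) (by omega),
                  hfilter (Finset.Icc (i+1) (K+1+1-1)) (K+1+1) (by simp only [Finset.mem_Icc]; omega),
                  hfilter (Finset.Icc (i+1) (K+1-1)) (K+1+1) (by simp only [Finset.mem_Icc]; omega),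
                  if_pos (show i ≤ K from hiK),
                  if_neg (show ¬(i ≤ K ∧ K+2 ≤ K+1) by omega),
                  hIccE (K+2) (K+1-1) (by omega),
                  hfilter (Finset.Icc (i+1) (K+1-1)) (K+1) (by simp only [Finset.mem_Icc]; omega)]
              simp only [Finset.sum_empty, ite_self, smul_zero, add_zero]
              rw [map_add, map_sum, hL (K+1) i (K+1) h1 (by omega) (by omega),
                  if_pos (show i < K+1 ∧ K+1 = K+1 by omega)]
              have hsumR : (∑ s ∈ Finset.Icc (i+1) (K+1-1), L (K+1) (α • e i s))
                  = ∑ s ∈ Finset.Icc (i+1) (K+1-1), α • e i s := by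
                refine Finset.sum_congr rfl (fun s hs => ?_)
                rw [Finset.mem_Icc] at hs
                rw [map_smul, hL (K+1) i s h1 (by omega) (by omega),
                    if_neg (show ¬(i < K+1 ∧ s = K+1) by omega),
                    if_neg (show ¬(i < K+1 ∧ s = K+1+1) by omega),
                    if_neg (show ¬(i = K+1 ∧ s = K+1+1) by omega),
                    if_neg (show ¬(i = K+1) by omega),
                    if_neg (show ¬(i = K+1+1) by omega)]
              rw [hsumR, show K+1+1-1 = K+1 from rfl, show K+1-1 = K from rfl,
                  Finset.sum_Icc_succ_top (show i+1 ≤ K+1 by omega)]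
              simp only [smul_add, Finset.smul_sum, smul_smul]
              rw [show ((x:R)*α) • e i (K+1) = -((1-(x:R)) • e i (K+1)) from by rw [hgc, neg_smul]]
              have hsum2 : (∑ s ∈ Finset.Icc (i+1) K, ((1-(x:R)) * α) • e i s)
                  = ∑ s ∈ Finset.Icc (i+1) K, (α • e i s - ((x:R) * α) • e i s) := by
                refine Finset.sum_congr rfl (fun s hs => ?_)
                rw [show (1-(x:R))*α = α - (x:R)*α by ring, sub_smul]
              rw [hsum2, Finset.sum_sub_distrib]
              abel
            · by_cases c6 : j = K + 2
              · -- 4c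
                subst c6
                rw [if_neg (show ¬(i = K+1+1) by omega),
                    if_neg (show ¬(K+1 = i ∧ i+1 < K+2) by omega),
                    if_neg (show ¬(K+1 = i ∧ K+2 = i+1) by omega),
                    if_neg (show ¬(i < K+1 ∧ K+1+1 < K+2) by omega),
                    if_pos (show i < K+1 ∧ K+1+1 = K+2 by omega),
                    map_sub, map_smul,
                    show K+2-1 = K+1 from rfl,
                    hMk (K+1) (by omega) hKn i (K+1) h1 (by omega) (by omega),
                    hMk (K+1) (by omega) hKn (K+1) (K+1+1) (by omega) (by omega) (by omega),
                    if_pos (show i ≤ K+1 by omega),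
                    if_neg (show ¬(i ≤ K+1 ∧ K+1+2 ≤ K+1) by omega),
                    if_pos (show K+1 ≤ K+1 from le_rfl),
                    if_neg (show ¬(K+1 ≤ K+1 ∧ K+1+2 ≤ K+1+1) by omega),
                    hIccE (K+1+2) (K+1-1) (by omega),
                    hIccE (K+1+2) (K+1+1-1) (by omega),
                    hIccE (K+1+1) (K+1+1-1) (by omega),
                    hfilter (Finset.Icc (i+1) (K+1-1)) (K+1+1) (by simp only [Finset.mem_Icc]; omega),
                    if_pos (show i ≤ K from hiK),
                    if_pos (show i ≤ K ∧ K+2 ≤ K+2 by omega),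
                    hIccE (K+2) (K+1) (by omega),
                    hIccFtop (i+1) K]
                simp only [Finset.filter_empty, Finset.sum_empty, add_zero]
                rw [map_add, map_add, map_sum, map_smul,
                    hL (K+1) i (K+2) h1 (by omega) (by omega),
                    if_neg (show ¬(i < K+1 ∧ K+2 = K+1) by omega),
                    if_pos (show i < K+1 ∧ K+2 = K+1+1 by omega),
                    hL (K+1) (K+1) (K+2) (by omega) (by omega) (by omega),
                    if_neg (show ¬(K+1 < K+1 ∧ K+2 = K+1) by omega),
                    if_neg (show ¬(K+1 < K+1 ∧ K+2 = K+1+1) by omega),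
                    if_pos (show K+1 = K+1 ∧ K+2 = K+1+1 by omega)]
                have hsumR : (∑ s ∈ Finset.Icc (i+1) K, L (K+1) (α • e i s))
                    = ∑ s ∈ Finset.Icc (i+1) K, α • e i s := by
                  refine Finset.sum_congr rfl (fun s hs => ?_)
                  rw [Finset.mem_Icc] at hs
                  rw [map_smul, hL (K+1) i s h1 (by omega) (by omega),
                      if_neg (show ¬(i < K+1 ∧ s = K+1) by omega),
                      if_neg (show ¬(i < K+1 ∧ s = K+1+1) by omega),
                      if_neg (show ¬(i = K+1 ∧ s = K+1+1) by omega),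
                      if_neg (show ¬(i = K+1) by omega),
                      if_neg (show ¬(i = K+1+1) by omega)]
                rw [hsumR, show K+1-1 = K from rfl, smul_smul, ← hI3, neg_smul]
                abel
              · -- 4d : j ≥ K+3
                rw [if_neg (show ¬(i = K+1+1) by omega),
                    if_neg (show ¬(K+1 = i ∧ i+1 < j) by omega),
                    if_neg (show ¬(K+1 = i ∧ j = i+1) by omega),
                    if_pos (show i < K+1 ∧ K+1+1 < j by omega),
                    map_sub, map_smul,
                    hMk (K+1) (by omega) hKn i j h1 h2 h3,
                    hMk (K+1) (by omega) hKn (K+1) (K+1+1) (by omega) (by omega) (by omega),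
                    if_pos (show i ≤ K+1 by omega),
                    if_pos (show i ≤ K+1 ∧ K+1+2 ≤ j by omega),
                    if_pos (show K+1 ≤ K+1 from le_rfl),
                    if_neg (show ¬(K+1 ≤ K+1 ∧ K+1+2 ≤ K+1+1) by omega),
                    hIccE (K+1+2) (K+1+1-1) (by omega),
                    hIccE (K+1+1) (K+1+1-1) (by omega),
                    if_pos (show i ≤ K from hiK),
                    if_pos (show i ≤ K ∧ K+2 ≤ j by omega)]
                simp only [Finset.filter_empty, Finset.sum_empty, add_zero]
                rw [Finset.filter_ne', Finset.filter_ne',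
                    ← Finset.add_sum_erase ((Finset.Icc (i+1) (j-1)).erase (K+1+1))
                      (fun j' => α • e i j')
                      (show (K+1) ∈ ((Finset.Icc (i+1) (j-1)).erase (K+1+1)) from by
                        simp only [Finset.mem_erase, Finset.mem_Icc]; omega),
                    map_add, map_add, map_add, map_sum, map_sum, map_smul,
                    hL (K+1) i j h1 h2 h3,
                    if_neg (show ¬(i < K+1 ∧ j = K+1) by omega),
                    if_neg (show ¬(i < K+1 ∧ j = K+1+1) by omega),
                    if_neg (show ¬(i = K+1 ∧ j = K+1+1) by omega),
                    if_neg (show ¬(i = K+1) by omega),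
                    if_neg (show ¬(i = K+1+1) by omega),
                    ← Finset.add_sum_erase ((Finset.Icc (i+1) (j-1)).erase (K+1))
                      (fun j' => L (K+1) (α • e i j'))
                      (show (K+1+1) ∈ ((Finset.Icc (i+1) (j-1)).erase (K+1)) from by
                        simp only [Finset.mem_erase, Finset.mem_Icc]; omega),
                    map_smul, hL (K+1) i (K+1+1) h1 (by omega) (by omega),
                    if_neg (show ¬(i < K+1 ∧ K+1+1 = K+1) by omega),
                    if_pos (show i < K+1 ∧ K+1+1 = K+1+1 by omega),
                    hL (K+1) (K+1) j (by omega) (by omega) h3,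
                    if_neg (show ¬(K+1 < K+1 ∧ j = K+1) by omega),
                    if_neg (show ¬(K+1 < K+1 ∧ j = K+1+1) by omega),
                    if_neg (show ¬(K+1 = K+1 ∧ j = K+1+1) by omega),
                    if_pos (show K+1 = K+1 from rfl),
                    hsplit (K+2) (j-1) _ (by omega),
                    map_smul, hL (K+1) (K+1) (K+2) (by omega) (by omega) (by omega),
                    if_neg (show ¬(K+1 < K+1 ∧ K+2 = K+1) by omega),
                    if_neg (show ¬(K+1 < K+1 ∧ K+2 = K+1+1) by omega),
                    if_pos (show K+1 = K+1 ∧ K+2 = K+1+1 by omega),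
                    heraseComm ((Finset.Icc (i+1) (j-1))) (K+1+1) (K+1)]
                have hsumR1 : (∑ s ∈ ((Finset.Icc (i+1) (j-1)).erase (K+1)).erase (K+1+1),
                      L (K+1) (α • e i s))
                    = ∑ s ∈ ((Finset.Icc (i+1) (j-1)).erase (K+1)).erase (K+1+1), α • e i s := by
                  refine Finset.sum_congr rfl (fun s hs => ?_)
                  rw [Finset.mem_erase, Finset.mem_erase, Finset.mem_Icc] at hs
                  rw [map_smul, hL (K+1) i s h1 (by omega) (by omega),
                      if_neg (show ¬(i < K+1 ∧ s = K+1) by omega),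
                      if_neg (show ¬(i < K+1 ∧ s = K+1+1) by omega),
                      if_neg (show ¬(i = K+1 ∧ s = K+1+1) by omega),
                      if_neg (show ¬(i = K+1) by omega),
                      if_neg (show ¬(i = K+1+1) by omega)]
                have hsumR2 : (∑ s ∈ Finset.Icc (K+2+1) (j-1), L (K+1) ((α^2) • e (K+1) s))
                    = ∑ s ∈ Finset.Icc (K+2+1) (j-1), (α^2) • e (K+1+1) s := by
                  refine Finset.sum_congr rfl (fun s hs => ?_)
                  rw [Finset.mem_Icc] at hs
                  rw [map_smul, hL (K+1) (K+1) s (by omega) (by omega) (by omega),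
                      if_neg (show ¬(K+1 < K+1 ∧ s = K+1) by omega),
                      if_neg (show ¬(K+1 < K+1 ∧ s = K+1+1) by omega),
                      if_neg (show ¬(K+1 = K+1 ∧ s = K+1+1) by omega),
                      if_pos (show K+1 = K+1 from rfl)]
                rw [hsumR1, hsumR2, show K+1+2 = K+2+1 from rfl,
                    smul_smul, ← hI4, neg_smul]
                abel
  -- base case
  have hBase : Dk 1 * M₀ = Mk 1 * σ 1 := by
    apply hext
    intro i j h1 h2 h3
    rw [Module.End.mul_apply, Module.End.mul_apply, hM₀ i j h1 h2 h3,
        hσ 1 i j le_rfl hn h1 h2 h3, map_add, map_sum]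
    simp only [map_smul]
    by_cases c1 : i = 1
    · subst c1
      by_cases c2 : j = 2
      · subst c2
        rw [if_neg (show ¬(1 = 1 + 1) by omega),
            if_neg (show ¬(1 = 1 ∧ 1 + 1 < 2) by omega),
            if_pos (show 1 = 1 ∧ 2 = 1 + 1 by omega), map_neg, map_smul,
            hMk 1 le_rfl hn 1 2 le_rfl (by omega) (by omega),
            hDk 1 le_rfl hn 1 2 le_rfl (by omega) (by omega),
            if_neg (show ¬(1 = 1 ∧ 1 + 1 < 2) by omega),
            if_pos (show 1 = 1 ∧ 1 + 1 = 2 by omega),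
            hIccE (1+1) (2-1) (by omega), hIccE (1+2) (2-1) (by omega),
            if_pos (show (1:ℕ) ≤ 1 from le_rfl),
            if_neg (show ¬((1:ℕ) ≤ 1 ∧ 1 + 2 ≤ 2) by omega)]
        simp only [Finset.filter_empty, Finset.sum_empty, add_zero]
        show ((t*q⁻¹*q⁻¹ : Rˣ):R) • e 1 2 = -(((x:R)^2*y) • e 1 2)
        rw [hxQ, ← hI2, neg_smul]
      · -- i = 1, j ≥ 3
        rw [if_neg (show ¬(1 = 1 + 1) by omega),
            if_pos (show 1 = 1 ∧ 1 + 1 < j by omega),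
            map_sub, map_smul,
            hMk 1 le_rfl hn (1+1) j (by omega) (by omega) h3,
            hMk 1 le_rfl hn 1 (1+1) le_rfl (by omega) (by omega),
            hDk 1 le_rfl hn 1 j le_rfl h2 h3,
            if_pos (show 1 = 1 ∧ 1 + 1 < j by omega),
            hIccE (1+1) (1+1-1) (by omega), hIccE (1+2) (1+1-1) (by omega),
            if_pos (show (1:ℕ) ≤ 1 from le_rfl),
            if_neg (show ¬((1:ℕ) ≤ 1 ∧ 1 + 2 ≤ 1 + 1) by omega),
            if_neg (show ¬(1 + 1 ≤ 1) by omega),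
            if_neg (show ¬(1 + 1 ≤ 1 ∧ 1 + 2 ≤ j) by omega),
            hfilter (Finset.Icc (1+1+1) (j-1)) (1+1) (by simp only [Finset.mem_Icc]; omega),
            hsplit (1+1) (j-1) _ (by omega),
            hDk 1 le_rfl hn 1 (1+1) le_rfl (by omega) (by omega),
            if_neg (show ¬(1 = 1 ∧ 1 + 1 < 1 + 1) by omega),
            if_pos (show 1 = 1 ∧ 1 + 1 = 1 + 1 by omega)]
        have hsum1 : (∑ s ∈ Finset.Icc (1+1+1) (j-1), α • Dk 1 (e 1 s))
            = ∑ s ∈ Finset.Icc (1+1+1) (j-1), α • e (1+1) s := by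
          refine Finset.sum_congr rfl (fun s hs => ?_)
          rw [Finset.mem_Icc] at hs
          rw [hDk 1 le_rfl hn 1 s le_rfl (by omega) (by omega),
              if_pos (show 1 = 1 ∧ 1 + 1 < s by omega)]
        rw [hsum1]
        simp only [Finset.filter_empty, Finset.sum_empty, add_zero]
        rw [hxQ, smul_smul, ← hI3, neg_smul]
        abel
    · by_cases c2 : i = 2
      · subst c2
        rw [if_pos (show (2:ℕ) = 1 + 1 by omega), map_add, map_smul, map_smul,
            hMk 1 le_rfl hn 1 j le_rfl (by omega) h3,
            hMk 1 le_rfl hn 2 j (by omega) h2 h3,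
            if_pos (show (1:ℕ) ≤ 1 from le_rfl),
            if_pos (show (1:ℕ) ≤ 1 ∧ 1 + 2 ≤ j by omega),
            if_neg (show ¬((2:ℕ) ≤ 1) by omega),
            if_neg (show ¬((2:ℕ) ≤ 1 ∧ 1 + 2 ≤ j) by omega),
            hIccF (1+1) (j-1),
            hfilter (Finset.Icc (2+1) (j-1)) (1+1) (by simp only [Finset.mem_Icc]; omega),
            hDk 1 le_rfl hn 2 j (by omega) h2 h3,
            if_neg (show ¬(2 = 1 ∧ 1 + 1 < j) by omega),
            if_neg (show ¬(2 = 1 ∧ 1 + 1 = j) by omega),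
            if_neg (show ¬(2 = 1 ∧ j ≤ 1) by omega),
            if_neg (show ¬(2 ≤ 1 ∧ j ≤ 1 + 1) by omega),
            if_neg (show ¬(2 ≤ 1 ∧ 1 + 2 ≤ j) by omega),
            if_pos (show 2 = 1 + 1 by omega), hxR,
            show (2:ℕ) - 1 = 1 from rfl]
        have hsumL : (∑ s ∈ Finset.Icc (2+1) (j-1), α • Dk 1 (e 2 s))
            = ∑ s ∈ Finset.Icc (2+1) (j-1), (α * (x:R)) • e 1 s := by
          refine Finset.sum_congr rfl (fun s hs => ?_)
          rw [Finset.mem_Icc] at hs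
          rw [hDk 1 le_rfl hn 2 s (by omega) (by omega) (by omega),
              if_neg (show ¬(2 = 1 ∧ 1 + 1 < s) by omega),
              if_neg (show ¬(2 = 1 ∧ 1 + 1 = s) by omega),
              if_neg (show ¬(2 = 1 ∧ s ≤ 1) by omega),
              if_neg (show ¬(2 ≤ 1 ∧ s ≤ 1 + 1) by omega),
              if_neg (show ¬(2 ≤ 1 ∧ 1 + 2 ≤ s) by omega),
              if_pos (show 2 = 1 + 1 by omega), hxR,
              show (2:ℕ) - 1 = 1 from rfl, smul_smul]
        rw [hsumL]
        simp only [smul_add, Finset.smul_sum, smul_smul]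
        rw [show (1:ℕ) + 1 = 2 from rfl, show (1:ℕ) + 2 = 2 + 1 from rfl]
        have hcb : (1-(x:R))*α = -((x:R)*α^2) := by linear_combination hz2
        have hcc : (x:R)*α = -(1-(x:R)) := by linear_combination hz1
        rw [show ((x:R)*α) • e 2 j = -((1-(x:R)) • e 2 j) from by rw [hcc, neg_smul]]
        simp only [hcb, neg_smul, Finset.sum_neg_distrib]
        simp only [mul_comm α (x:R)]
        abel_nf
        all_goals simp only [smul_zero, add_zero]
      · -- i ≥ 3
        rw [if_neg (show ¬(i = 1 + 1) by omega),
            if_neg (show ¬(1 = i ∧ i + 1 < j) by omega),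
            if_neg (show ¬(1 = i ∧ j = i + 1) by omega),
            if_neg (show ¬(i < 1 ∧ 1 + 1 < j) by omega),
            if_neg (show ¬(i < 1 ∧ 1 + 1 = j) by omega),
            if_neg (show ¬(1 = j) by omega),
            hMk 1 le_rfl hn i j h1 h2 h3,
            if_neg (show ¬(i ≤ 1) by omega),
            if_neg (show ¬(i ≤ 1 ∧ 1 + 2 ≤ j) by omega),
            hfilter (Finset.Icc (i+1) (j-1)) (1+1) (by simp only [Finset.mem_Icc]; omega),
            hDk 1 le_rfl hn i j h1 h2 h3,
            if_neg (show ¬(i = 1 ∧ 1 + 1 < j) by omega),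
            if_neg (show ¬(i = 1 ∧ 1 + 1 = j) by omega),
            if_neg (show ¬(i = 1 ∧ j ≤ 1) by omega),
            if_neg (show ¬(i ≤ 1 ∧ j ≤ 1 + 1) by omega),
            if_neg (show ¬(i ≤ 1 ∧ 1 + 2 ≤ j) by omega),
            if_neg (show ¬(i = 1 + 1) by omega)]
        have hsumL : (∑ s ∈ Finset.Icc (i+1) (j-1), α • Dk 1 (e i s))
            = ∑ s ∈ Finset.Icc (i+1) (j-1), α • e i s := by
          refine Finset.sum_congr rfl (fun s hs => ?_)
          rw [Finset.mem_Icc] at hs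
          rw [hDk 1 le_rfl hn i s h1 (by omega) (by omega),
              if_neg (show ¬(i = 1 ∧ 1 + 1 < s) by omega),
              if_neg (show ¬(i = 1 ∧ 1 + 1 = s) by omega),
              if_neg (show ¬(i = 1 ∧ s ≤ 1) by omega),
              if_neg (show ¬(i ≤ 1 ∧ s ≤ 1 + 1) by omega),
              if_neg (show ¬(i ≤ 1 ∧ 1 + 2 ≤ s) by omega),
              if_neg (show ¬(i = 1 + 1) by omega)]
        rw [hsumL, add_zero, add_zero]
  -- main induction
  intro k hk1
  induction k, hk1 using Nat.le_induction with
  | base =>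
    intro h1n
    have : compSeq σ 1 1 = σ 1 := by
      show σ (1 + 0) * compSeq σ 1 0 = σ 1
      show σ (1 + 0) * 1 = σ 1
      rw [mul_one]
    rw [this]; exact hBase
  | succ k hk ih =>
    intro hsn
    have hPi : compSeq σ 1 (k+1) = σ (k+1) * compSeq σ 1 k := by
      show σ (1 + k) * compSeq σ 1 k = _
      rw [Nat.add_comm 1 k]
    rw [hPi, hB k hk hsn, mul_assoc, ih (le_trans (Nat.le_succ k) hsn),
      ← mul_assoc, ← hA k hk hsn, mul_assoc]
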